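/- Let a = (a_0,...,a_n) and b = (b_0,...,b_n) be strictly decreasing sequences of non-negative integers with a ≠ b and b_i ≥ a_i for all i. Then every monomial occurring in the Schur polynomial σ_b(x_0,...,x_n) is properly divisible by some monomial occurring in σ_a(x_0,...,x_n). -/

import Mathlib

open MvPolynomial
open Classical

/-- The Schur polynomial in variables `x_0, …, x_n` associated to the Young
diagram `μ`, defined as a sum over semistandard fillings with entries in
`{0, …, n}`. -/
noncomputable def schurPoly (n : ℕ) (μ : YoungDiagram) :
    MvPolynomial (Fin (n + 1)) ℤ :=
  ∑ T ∈ Finset.univ.filter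
      (fun T : μ.cells → Fin (n + 1) =>
        (∀ c c' : μ.cells, (c : ℕ × ℕ).1 = (c' : ℕ × ℕ).1 →
          (c : ℕ × ℕ).2 ≤ (c' : ℕ × ℕ).2 → T c ≤ T c') ∧
        (∀ c c' : μ.cells, (c : ℕ × ℕ).2 = (c' : ℕ × ℕ).2 →
          (c : ℕ × ℕ).1 < (c' : ℕ × ℕ).1 → T c < T c')),
    ∏ c : μ.cells, X (T c)

/-- If `a ≠ b` are strictly decreasing sequences of non-negative integers with
`b_i ≥ a_i` for all `i`, then every monomial of `σ_b` is properly divisible by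
some monomial of `σ_a`. -/

noncomputable def wt {n : ℕ} {μ : YoungDiagram} (T : μ.cells → Fin (n+1)) : Fin (n+1) →₀ ℕ :=
  ∑ c : μ.cells, Finsupp.single (T c) 1

lemma prod_X_single {σ ι : Type*} (s : Finset ι) (f : ι → σ) :
    (∏ i ∈ s, (X (f i) : MvPolynomial σ ℤ)) =
      monomial (∑ i ∈ s, Finsupp.single (f i) 1) 1 := by
  classical
  induction s using Finset.induction with
  | empty => simp
  | insert _ _ h ih =>
    rw [Finset.prod_insert h, ih, Finset.sum_insert h, ← pow_one (X (f _)),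
      X_pow_eq_monomial, monomial_mul, one_mul]

lemma mem_support_schurPoly {n : ℕ} {μ : YoungDiagram} {d : Fin (n+1) →₀ ℕ} :
    d ∈ (schurPoly n μ).support ↔
      ∃ T ∈ Finset.univ.filter
        (fun T : μ.cells → Fin (n + 1) =>
          (∀ c c' : μ.cells, (c : ℕ × ℕ).1 = (c' : ℕ × ℕ).1 →
            (c : ℕ × ℕ).2 ≤ (c' : ℕ × ℕ).2 → T c ≤ T c') ∧
          (∀ c c' : μ.cells, (c : ℕ × ℕ).2 = (c' : ℕ × ℕ).2 →
            (c : ℕ × ℕ).1 < (c' : ℕ × ℕ).1 → T c < T c')),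
        wt T = d := by
  classical
  rw [MvPolynomial.mem_support_iff]
  unfold schurPoly
  rw [MvPolynomial.coeff_sum]
  have h1 : ∀ T : μ.cells → Fin (n+1),
      coeff d (∏ c : μ.cells, (X (T c) : MvPolynomial (Fin (n+1)) ℤ)) =
        if wt T = d then 1 else 0 := by
    intro T
    rw [prod_X_single, coeff_monomial]
    rfl
  rw [Finset.sum_congr rfl (fun T _ => h1 T), Finset.sum_boole]
  simp [Finset.filter_filter, Finset.card_eq_zero, Finset.filter_eq_empty_iff]
  tauto

lemma decr_ge {n : ℕ} (a : Fin (n+1) → ℕ) (ha : ∀ i j : Fin (n+1), i < j → a j < a i)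
    (i : Fin (n+1)) : n - (i : ℕ) ≤ a i := by
  have key : ∀ m, ∀ k, ∀ h : k < n + 1, n = k + m → m ≤ a ⟨k, h⟩ := by
    intro m
    induction m with
    | zero => intro k h hk; exact Nat.zero_le _
    | succ m ih =>
      intro k h hk
      have hk1 : k + 1 < n + 1 := by omega
      have h1 := ha ⟨k, h⟩ ⟨k+1, hk1⟩ (by simp [Fin.lt_def])
      have h2 := ih (k+1) hk1 (by omega)
      omega
  have := key (n - i.val) i.val i.isLt (by omega)
  simpa using this

lemma wt_degree {n : ℕ} {μ : YoungDiagram} (T : μ.cells → Fin (n+1)) :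
    ∑ i, wt T i = μ.cells.card := by
  unfold wt
  simp only [Finsupp.finset_sum_apply]
  rw [Finset.sum_comm]
  simp [Finsupp.single_apply]

theorem stmt2 (n : ℕ) (a b : Fin (n + 1) → ℕ)
    (ha : ∀ i j : Fin (n + 1), i < j → a j < a i)
    (hb : ∀ i j : Fin (n + 1), i < j → b j < b i)
    (hab : ∀ i, a i ≤ b i) (hne : a ≠ b)
    (μa μb : YoungDiagram)
    (hμa : ∀ i : Fin (n + 1), μa.rowLen i = a i - (n - (i : ℕ)))
    (hμa' : ∀ m : ℕ, n + 1 ≤ m → μa.rowLen m = 0)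
    (hμb : ∀ i : Fin (n + 1), μb.rowLen i = b i - (n - (i : ℕ)))
    (hμb' : ∀ m : ℕ, n + 1 ≤ m → μb.rowLen m = 0) :
    ∀ d ∈ (schurPoly n μb).support, ∃ e ∈ (schurPoly n μa).support,
      e ≤ d ∧ e ≠ d := by
  classical
  -- the cells of μa are a subset of those of μb
  have hrow : ∀ m : ℕ, μa.rowLen m ≤ μb.rowLen m := by
    intro m
    by_cases hm : m < n + 1
    · rw [show m = ((⟨m, hm⟩ : Fin (n+1)) : ℕ) from rfl, hμa, hμb]
      exact Nat.sub_le_sub_right (hab _) _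
    · rw [hμa' m (by omega)]; exact Nat.zero_le _
  have hsub : μa.cells ⊆ μb.cells := by
    intro p hp
    rw [YoungDiagram.mem_cells, YoungDiagram.mem_iff_lt_rowLen] at *
    exact lt_of_lt_of_le hp (hrow p.1)
  -- strictness
  obtain ⟨i0, hi0⟩ : ∃ i, a i < b i := by
    by_contra h
    push_neg at h
    exact hne (funext fun i => le_antisymm (hab i) (h i))
  have hc0 : ((i0 : ℕ), a i0 - (n - (i0 : ℕ))) ∈ μb.cells ∧
      ((i0 : ℕ), a i0 - (n - (i0 : ℕ))) ∉ μa.cells := by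
    constructor
    · rw [YoungDiagram.mem_cells, YoungDiagram.mem_iff_lt_rowLen]
      show a i0 - (n - (i0:ℕ)) < μb.rowLen i0
      rw [hμb]
      exact Nat.sub_lt_sub_right (decr_ge a ha i0) hi0
    · rw [YoungDiagram.mem_cells, YoungDiagram.mem_iff_lt_rowLen]
      show ¬ a i0 - (n - (i0:ℕ)) < μa.rowLen i0
      rw [hμa]; omega
  have hss : μa.cells ⊂ μb.cells := ⟨hsub, fun h => hc0.2 (h hc0.1)⟩
  have hcard : μa.cells.card < μb.cells.card := Finset.card_lt_card hss
  intro d hd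
  obtain ⟨T, hTmem, hTwt⟩ := mem_support_schurPoly.mp hd
  rw [Finset.mem_filter] at hTmem
  set S : μa.cells → Fin (n+1) := fun c => T ⟨(c : ℕ × ℕ), hsub c.2⟩ with hS
  have hSmem : S ∈ Finset.univ.filter
      (fun T : μa.cells → Fin (n + 1) =>
        (∀ c c' : μa.cells, (c : ℕ × ℕ).1 = (c' : ℕ × ℕ).1 →
          (c : ℕ × ℕ).2 ≤ (c' : ℕ × ℕ).2 → T c ≤ T c') ∧
        (∀ c c' : μa.cells, (c : ℕ × ℕ).2 = (c' : ℕ × ℕ).2 →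
          (c : ℕ × ℕ).1 < (c' : ℕ × ℕ).1 → T c < T c')) := by
    rw [Finset.mem_filter]
    refine ⟨Finset.mem_univ _, ?_, ?_⟩
    · intro c c' h1 h2
      exact hTmem.2.1 ⟨(c : ℕ × ℕ), hsub c.2⟩ ⟨(c' : ℕ × ℕ), hsub c'.2⟩ h1 h2
    · intro c c' h1 h2
      exact hTmem.2.2 ⟨(c : ℕ × ℕ), hsub c.2⟩ ⟨(c' : ℕ × ℕ), hsub c'.2⟩ h1 h2
  refine ⟨wt S, mem_support_schurPoly.mpr ⟨S, hSmem, rfl⟩, ?_, ?_⟩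
  · -- wt S ≤ d
    set F : ℕ × ℕ → (Fin (n+1) →₀ ℕ) :=
      fun p => if h : p ∈ μb.cells then Finsupp.single (T ⟨p, h⟩) 1 else 0 with hF
    have hwT : wt T = ∑ p ∈ μb.cells, F p := by
      rw [← Finset.sum_coe_sort μb.cells F]
      refine Finset.sum_congr rfl (fun c _ => ?_)
      simp only [hF]
      rw [dif_pos c.2]
    have hwS : wt S = ∑ p ∈ μa.cells, F p := by
      rw [← Finset.sum_coe_sort μa.cells F]
      refine Finset.sum_congr rfl (fun c _ => ?_)
      simp only [hF]
      rw [dif_pos (hsub c.2)]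
    rw [← hTwt, hwT, hwS]
    exact Finset.sum_le_sum_of_subset_of_nonneg hsub (fun p _ _ => zero_le)
  · -- wt S ≠ d
    intro heq
    have h1 := wt_degree T
    have h2 := wt_degree S
    rw [heq] at h2
    rw [hTwt] at h1
    omega
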